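/- Let 𝒪 ⊆ ℝⁿ be open, Ouvs an open set with closure in 𝒪, and φ : 𝒪 → ℝᵐ a C¹ immersion. Suppose F : ℝᵐ → ℝ^{m−n} is a C² function which is a submersion on a neighborhood of φ(Ouvs) and satisfies F(φ(x)) = 0 for all x in Ouvs. Then for every x in Ouvs the m×m matrix whose first n columns are ∂φ/∂x(x) and whose last m−n columns are (∂F/∂ξ(φ(x)))ᵀ is invertible. -/

import Mathlib

/-- Completion of the Jacobian of an immersion by the transposed Jacobian
of a submersion F vanishing on the image: the resulting m×m matrix (here the linear map
(u,v) ↦ Dφ(x)u + DF(φ(x))ᵀ v) is invertible on Ouvs. -/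
theorem stmt_2 (n k : ℕ) (𝒪 : Set (EuclideanSpace ℝ (Fin n))) (hO : IsOpen 𝒪)
    (Ouvs : Set (EuclideanSpace ℝ (Fin n))) (hOuvsOpen : IsOpen Ouvs)
    (hOuvsCl : closure Ouvs ⊆ 𝒪)
    (φ : EuclideanSpace ℝ (Fin n) → EuclideanSpace ℝ (Fin (n + k)))
    (hφ : ContDiffOn ℝ 1 φ 𝒪)
    (hφimm : ∀ x ∈ 𝒪, Function.Injective (fderiv ℝ φ x))
    (F : EuclideanSpace ℝ (Fin (n + k)) → EuclideanSpace ℝ (Fin k))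
    (hF : ContDiff ℝ 2 F)
    (U : Set (EuclideanSpace ℝ (Fin (n + k)))) (hU : IsOpen U) (hUim : φ '' Ouvs ⊆ U)
    (hFsub : ∀ ξ ∈ U, Function.Surjective (fderiv ℝ F ξ))
    (hF0 : ∀ x ∈ Ouvs, F (φ x) = 0) :
    ∀ x ∈ Ouvs,
      Function.Bijective
        (fun uv : EuclideanSpace ℝ (Fin n) × EuclideanSpace ℝ (Fin k) =>
          fderiv ℝ φ x uv.1 + ContinuousLinearMap.adjoint (fderiv ℝ F (φ x)) uv.2) := by
  intro x hx
  have hxO : x ∈ 𝒪 := hOuvsCl (subset_closure hx)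
  set A := fderiv ℝ F (φ x) with hA
  set B := fderiv ℝ φ x with hB
  have hφdiff : DifferentiableAt ℝ φ x :=
    (hφ.differentiableOn one_ne_zero).differentiableAt (hO.mem_nhds hxO)
  have hFdiff : DifferentiableAt ℝ F (φ x) :=
    (hF.differentiable (by norm_num)).differentiableAt
  -- chain rule: A ∘ B = 0 since F ∘ φ = 0 on the open set Ouvs
  have hcomp : A.comp B = 0 := by
    have h1 : fderiv ℝ (F ∘ φ) x = A.comp B := fderiv_comp x hFdiff hφdiff
    have h2 : F ∘ φ =ᶠ[nhds x] (fun _ => (0 : EuclideanSpace ℝ (Fin k))) := by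
      filter_upwards [hOuvsOpen.mem_nhds hx] with y hy using hF0 y hy
    have h3 : fderiv ℝ (F ∘ φ) x = 0 := by
      rw [h2.fderiv_eq]; simp
    rw [← h1, h3]
  set L := B.coprod (ContinuousLinearMap.adjoint A) with hL
  have hfun : (fun uv : EuclideanSpace ℝ (Fin n) × EuclideanSpace ℝ (Fin k) =>
      B uv.1 + ContinuousLinearMap.adjoint A uv.2) = ⇑L := rfl
  rw [hfun]
  -- injectivity
  have hker : ∀ uv, L uv = 0 → uv = 0 := by
    rintro ⟨u, v⟩ huv
    have huv' : B u + ContinuousLinearMap.adjoint A v = 0 := huv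
    have hAv : A (ContinuousLinearMap.adjoint A v) = 0 := by
      have := congrArg A huv'
      have hABu : A (B u) = 0 := by
        have : (A.comp B) u = (0 : EuclideanSpace ℝ (Fin n) →L[ℝ] _) u := by rw [hcomp]
        simpa using this
      simpa [map_add, hABu] using this
    have hAstar : ContinuousLinearMap.adjoint A v = 0 := by
      have hin : (inner ℝ (ContinuousLinearMap.adjoint A v)
          (ContinuousLinearMap.adjoint A v) : ℝ) = 0 := by
        rw [ContinuousLinearMap.adjoint_inner_left, hAv, inner_zero_right]
      exact inner_self_eq_zero.mp hin
    have hBu : B u = 0 := by simpa [hAstar] using huv'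
    have hu : u = 0 := hφimm x hxO (by simpa using hBu)
    have hv : v = 0 := by
      have hsur : Function.Surjective A := hFsub (φ x) (hUim ⟨x, hx, rfl⟩)
      obtain ⟨w, hw⟩ := hsur v
      have : (inner ℝ v v : ℝ) = 0 := by
        rw [← hw, ← ContinuousLinearMap.adjoint_inner_left, hw, hAstar, inner_zero_left]
      exact inner_self_eq_zero.mp this
    simp [hu, hv, Prod.ext_iff]
  have hinj : Function.Injective L := by
    intro p q hpq
    have : L (p - q) = 0 := by rw [map_sub, hpq, sub_self]
    have := hker _ this
    exact sub_eq_zero.mp this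
  constructor
  · exact hinj
  · have hrank : Module.finrank ℝ (EuclideanSpace ℝ (Fin n) × EuclideanSpace ℝ (Fin k)) =
        Module.finrank ℝ (EuclideanSpace ℝ (Fin (n + k))) := by
      simp [Module.finrank_prod]
    exact (LinearMap.injective_iff_surjective_of_finrank_eq_finrank (f := (L : _ →ₗ[ℝ] _)) hrank).mp hinj
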